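/- In k[x1,x2,x3], the pair v1, v2 is a regular sequence (in either order), where v1 = x1^{c1} − x2^{b2}·x3^{a3} and v2 = x2^{c2} − x1^{a1}·x3^{b3}. -/

import Mathlib

open MvPolynomial Pointwise

private lemma aux_pair {A : Type*} [CommRing A] [IsDomain A] [DecompositionMonoid A]
    {f g : A} (hf : f ≠ 0) (hrp : IsRelPrime f g) (htop : Ideal.ofList [f, g] ≠ ⊤) :
    RingTheory.Sequence.IsRegular A [f, g] := by
  have hmem : ∀ (r x : A), x ∈ r • (⊤ : Submodule A A) ↔ r ∣ x := by
    intro r x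
    rw [← SetLike.mem_coe, Submodule.coe_pointwise_smul, Set.mem_smul_set]
    simp only [Submodule.top_coe, Set.mem_univ, true_and, smul_eq_mul]
    exact ⟨fun ⟨y, hy⟩ => ⟨y, hy.symm⟩, fun ⟨y, hy⟩ => ⟨y, hy.symm⟩⟩
  rw [RingTheory.Sequence.isRegular_iff]
  refine ⟨.cons ?_ (.cons ?_ (.nil _ _)), ?_⟩
  · intro x y hxy
    exact mul_left_cancel₀ hf (by simpa [smul_eq_mul] using hxy)
  · intro x y hxy
    obtain ⟨x, rfl⟩ := Submodule.Quotient.mk_surjective _ x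
    obtain ⟨y, rfl⟩ := Submodule.Quotient.mk_surjective _ y
    simp only [← Submodule.Quotient.mk_smul] at hxy
    rw [Submodule.Quotient.eq] at hxy
    rw [Submodule.Quotient.eq]
    rw [hmem] at hxy ⊢
    have h2 : f ∣ g * (x - y) := by
      simpa [smul_eq_mul, mul_sub] using hxy
    exact hrp.dvd_of_dvd_mul_left h2
  · intro h
    apply htop
    have hle : Ideal.ofList [f, g] • (⊤ : Submodule A A) ≤ Ideal.ofList [f, g] := by
      refine Submodule.smul_le.2 fun r hr n _ => ?_
      simpa [smul_eq_mul] using Ideal.mul_mem_right n _ hr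
    exact top_le_iff.mp (h.le.trans hle)

private lemma aux_unit {k : Type*} [Field k] (d f : MvPolynomial (Fin 3) k) (w : Fin 3 → ℕ)
    (hw : ∀ i, 0 < w i) (n : ℕ) (hdf : d ∣ f) (hf0 : f ≠ 0)
    (hf : aeval (fun i => Polynomial.C (X i) * Polynomial.X ^ w i) f
        = Polynomial.C f * Polynomial.X ^ n)
    (hconst : eval (fun _ => (0 : k)) d ≠ 0) : IsUnit d := by
  classical
  set Φ : MvPolynomial (Fin 3) k →ₐ[k] Polynomial (MvPolynomial (Fin 3) k) :=
    aeval (fun i => Polynomial.C (X i) * Polynomial.X ^ w i) with hΦ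
  obtain ⟨r, hr⟩ := hdf
  have hmul : Φ d * Φ r = Polynomial.C f * Polynomial.X ^ n := by
    rw [← map_mul, ← hr, hΦ, hf]
  have hcomp : (Polynomial.evalRingHom (0 : MvPolynomial (Fin 3) k)).comp Φ.toRingHom
      = (C : k →+* MvPolynomial (Fin 3) k).comp (eval (fun _ => (0 : k))) := by
    apply MvPolynomial.ringHom_ext
    · intro a; simp [Φ, MvPolynomial.algebraMap_eq]
    · intro i
      simp [Φ, zero_pow (hw i).ne']
  have hc0 : ∀ p : MvPolynomial (Fin 3) k, (Φ p).coeff 0 = C (eval (fun _ => (0 : k)) p) := by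
    intro p
    rw [Polynomial.coeff_zero_eq_eval_zero]
    exact congrArg (· p) (congrArg DFunLike.coe hcomp)
  have hXnd : ¬ (Polynomial.X ∣ Φ d) := by
    rw [Polynomial.X_dvd_iff, hc0]
    simpa using hconst
  have hpow : Polynomial.X ^ n ∣ Φ r := by
    refine Polynomial.prime_X.pow_dvd_of_dvd_mul_left n hXnd ⟨Polynomial.C f, ?_⟩
    rw [hmul]; ring
  obtain ⟨s, hs⟩ := hpow
  have hkey : Polynomial.C f = Φ d * s := by
    have h2 : Polynomial.X ^ n * Polynomial.C f = Polynomial.X ^ n * (Φ d * s) := by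
      have := hmul
      rw [hs] at this
      rw [mul_comm (Polynomial.X ^ n) (Polynomial.C f), ← this]; ring
    exact mul_left_cancel₀ (pow_ne_zero n Polynomial.X_ne_zero) h2
  have hd0 : Φ d ≠ 0 := by
    intro h
    have h5 := hc0 d
    rw [h] at h5
    simp only [Polynomial.coeff_zero] at h5
    exact hconst (by simpa using h5.symm)
  have hs0 : s ≠ 0 := by
    intro h
    rw [h, mul_zero] at hkey
    exact hf0 (by simpa using hkey)
  have hdeg : (Φ d).natDegree = 0 := by
    have h3 := Polynomial.natDegree_mul hd0 hs0
    rw [← hkey, Polynomial.natDegree_C] at h3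
    omega
  have hΦd : Φ d = Polynomial.C (C (eval (fun _ => (0 : k)) d)) := by
    rw [Polynomial.eq_C_of_natDegree_eq_zero hdeg, hc0]
  have hev : (Polynomial.evalRingHom (1 : MvPolynomial (Fin 3) k)).comp Φ.toRingHom
      = RingHom.id (MvPolynomial (Fin 3) k) := by
    apply MvPolynomial.ringHom_ext
    · intro a; simp [Φ, MvPolynomial.algebraMap_eq]
    · intro i; simp [Φ]
  have hd : d = C (eval (fun _ => (0 : k)) d) := by
    have h4 : (Polynomial.evalRingHom (1 : MvPolynomial (Fin 3) k)) (Φ d) = d :=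
      congrArg (· d) (congrArg DFunLike.coe hev)
    rw [hΦd] at h4
    simpa using h4.symm
  rw [hd]
  exact (isUnit_iff_ne_zero.mpr hconst).map (C : k →+* MvPolynomial (Fin 3) k)

private lemma aux_relprime {k : Type*} [Field k]
    (a1 a2 a3 b1 b2 b3 c1 c2 : ℕ)
    (ha1 : 0 < a1) (ha2 : 0 < a2) (ha3 : 0 < a3)
    (hb1 : 0 < b1) (hb2 : 0 < b2) (hb3 : 0 < b3)
    (hc1 : c1 = a1 + b1) (hc2 : c2 = a2 + b2) :
    IsRelPrime (X 0 ^ c1 - X 1 ^ b2 * X 2 ^ a3 : MvPolynomial (Fin 3) k)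
      (X 1 ^ c2 - X 0 ^ a1 * X 2 ^ b3) := by
  classical
  have hc1' : 0 < c1 := by omega
  have hc2' : 0 < c2 := by omega
  intro d hd1 hd2
  -- Step A : the "constant coefficient" of d is nonzero
  set φ : MvPolynomial (Fin 3) k →ₐ[k] MvPolynomial (Fin 3) k :=
    aeval ![X 0, X 1, 0] with hφdef
  have hφ1 : φ (X 0 ^ c1 - X 1 ^ b2 * X 2 ^ a3) = X 0 ^ c1 := by
    simp [φ, zero_pow ha3.ne']
  have hφ2 : φ (X 1 ^ c2 - X 0 ^ a1 * X 2 ^ b3) = X 1 ^ c2 := by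
    simp [φ, zero_pow hb3.ne']
  have hdvd1 : φ d ∣ X 0 ^ c1 := hφ1 ▸ map_dvd φ hd1
  have hdvd2 : φ d ∣ X 1 ^ c2 := hφ2 ▸ map_dvd φ hd2
  set e := finSuccEquiv k 2 with hedef
  have he1 : e (X 0 ^ c1) = Polynomial.X ^ c1 := by
    rw [map_pow, finSuccEquiv_X_zero]
  have he2 : e (X 1 ^ c2) = Polynomial.C (X 0 ^ c2 : MvPolynomial (Fin 2) k) := by
    have h1 : (X 1 : MvPolynomial (Fin 3) k) = X (Fin.succ 0) := rfl
    rw [map_pow, h1, finSuccEquiv_X_succ, ← Polynomial.C_pow]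
  have hdvd1' : e (φ d) ∣ Polynomial.X ^ c1 := he1 ▸ map_dvd e hdvd1
  obtain ⟨i, hi, hassoc⟩ := (dvd_prime_pow Polynomial.prime_X c1).mp hdvd1'
  have hiu : IsUnit (e (φ d)) := by
    rcases Nat.eq_zero_or_pos i with h0 | h0
    · rw [h0, pow_zero] at hassoc
      exact isUnit_of_dvd_unit hassoc.dvd isUnit_one
    · exfalso
      have hXd : Polynomial.X ∣ e (φ d) := (dvd_pow_self _ h0.ne').trans hassoc.symm.dvd
      have h5 : Polynomial.X ∣ Polynomial.C (X 0 ^ c2 : MvPolynomial (Fin 2) k) :=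
        hXd.trans (he2 ▸ map_dvd e hdvd2)
      rw [Polynomial.X_dvd_iff, Polynomial.coeff_C] at h5
      simp only [if_pos rfl] at h5
      exact pow_ne_zero c2 (MvPolynomial.X_ne_zero 0) h5
  have hud : IsUnit (φ d) := by
    have h6 := hiu.map e.symm.toAlgHom
    simpa using h6
  have hconst : eval (fun _ => (0 : k)) d ≠ 0 := by
    have h7 : IsUnit (eval (fun _ => (0 : k)) (φ d)) :=
      hud.map (eval (fun _ => (0 : k)))
    have h8 : (eval (fun _ => (0 : k))).comp φ.toRingHom = eval (fun _ => (0 : k)) := by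
      apply MvPolynomial.ringHom_ext
      · intro a; simp [φ, MvPolynomial.algebraMap_eq]
      · intro i; fin_cases i <;> simp [φ]
    have h9 : eval (fun _ => (0 : k)) (φ d) = eval (fun _ => (0 : k)) d :=
      congrArg (· d) (congrArg DFunLike.coe h8)
    rw [h9] at h7
    exact h7.ne_zero
  -- Step B : use the weighted grading
  set w : Fin 3 → ℕ := ![a3 * c2 + b2 * b3, b3 * c1 + a1 * a3, a1 * a2 + b1 * a2 + b1 * b2]
    with hwdef
  have hw0 : w 0 = a3 * c2 + b2 * b3 := rfl
  have hw1 : w 1 = b3 * c1 + a1 * a3 := rfl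
  have hw2 : w 2 = a1 * a2 + b1 * a2 + b1 * b2 := rfl
  refine aux_unit d _ w ?_ (c1 * (a3 * c2 + b2 * b3)) hd1 ?_ ?_ hconst
  · intro i
    fin_cases i
    · exact Nat.add_pos_left (Nat.mul_pos ha3 hc2') _
    · exact Nat.add_pos_left (Nat.mul_pos hb3 hc1') _
    · exact Nat.add_pos_left (Nat.add_pos_left (Nat.mul_pos ha1 ha2) _) _
  · intro h0
    have h1 : (1 : k) = 0 := by
      simpa [zero_pow hb2.ne', zero_pow ha3.ne'] using
        congrArg (eval ![(1 : k), 0, 0]) h0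
    exact one_ne_zero h1
  · have hexp2 : w 1 * b2 + w 2 * a3 = c1 * (a3 * c2 + b2 * b3) := by
      rw [hw1, hw2]; subst hc1 hc2; ring
    rw [map_sub, map_pow, map_mul, map_pow, map_pow, aeval_X, aeval_X, aeval_X,
      mul_pow, mul_pow, mul_pow, ← Polynomial.C_pow, ← Polynomial.C_pow, ← Polynomial.C_pow,
      ← pow_mul, ← pow_mul, ← pow_mul, map_sub, sub_mul]
    refine congrArg₂ HSub.hSub ?_ ?_
    · rw [show w 0 * c1 = c1 * (a3 * c2 + b2 * b3) by rw [hw0]; ring]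
    · rw [Polynomial.C_mul, ← hexp2, pow_add]; ring


/-- In `k[x1,x2,x3]`, the pair `v1, v2` is a regular sequence in either order. -/
theorem stmt_8 {k : Type*} [Field k]
    (a1 a2 a3 b1 b2 b3 c1 c2 c3 : ℕ)
    (ha1 : 0 < a1) (ha2 : 0 < a2) (ha3 : 0 < a3)
    (hb1 : 0 < b1) (hb2 : 0 < b2) (hb3 : 0 < b3)
    (hc1 : c1 = a1 + b1) (hc2 : c2 = a2 + b2) (hc3 : c3 = a3 + b3)
    (v1 v2 : MvPolynomial (Fin 3) k)
    (hv1 : v1 = X 0 ^ c1 - X 1 ^ b2 * X 2 ^ a3)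
    (hv2 : v2 = X 1 ^ c2 - X 0 ^ a1 * X 2 ^ b3) :
    RingTheory.Sequence.IsRegular (MvPolynomial (Fin 3) k) [v1, v2] ∧
    RingTheory.Sequence.IsRegular (MvPolynomial (Fin 3) k) [v2, v1] := by
  have hrp : IsRelPrime v1 v2 := by
    rw [hv1, hv2]
    exact aux_relprime a1 a2 a3 b1 b2 b3 c1 c2 ha1 ha2 ha3 hb1 hb2 hb3 hc1 hc2
  have hne1 : v1 ≠ 0 := by
    intro h0
    rw [hv1] at h0
    have h1 : (1 : k) = 0 := by
      simpa [zero_pow hb2.ne', zero_pow ha3.ne'] using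
        congrArg (eval ![(1 : k), 0, 0]) h0
    exact one_ne_zero h1
  have hne2 : v2 ≠ 0 := by
    intro h0
    rw [hv2] at h0
    have h1 : (1 : k) = 0 := by
      simpa [zero_pow ha1.ne', zero_pow hb3.ne'] using
        congrArg (eval ![(0 : k), 1, 0]) h0
    exact one_ne_zero h1
  have hc1' : 0 < c1 := by omega
  have hc2' : 0 < c2 := by omega
  have hvker : ∀ v : MvPolynomial (Fin 3) k, v = v1 ∨ v = v2 →
      eval (fun _ => (0 : k)) v = 0 := by
    rintro v (rfl | rfl)
    · rw [hv1]; simp [zero_pow hc1'.ne', hb2.ne']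
    · rw [hv2]; simp [zero_pow hc2'.ne', ha1.ne']
  have htop : ∀ x y : MvPolynomial (Fin 3) k, x = v1 ∨ x = v2 → y = v1 ∨ y = v2 →
      Ideal.ofList [x, y] ≠ ⊤ := by
    intro x y hx hy h
    have hle : Ideal.ofList [x, y] ≤ RingHom.ker (eval (fun _ => (0 : k))) := by
      rw [Ideal.span_le]
      rintro z hz
      simp only [List.mem_cons, List.not_mem_nil, or_false, Set.mem_setOf_eq] at hz
      rcases hz with rfl | rfl
      · exact hvker _ hx
      · exact hvker _ hy
    have h1 : (1 : MvPolynomial (Fin 3) k) ∈ Ideal.ofList [x, y] := h ▸ trivial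
    have h2 := hle h1
    rw [RingHom.mem_ker] at h2
    simp at h2
  exact ⟨aux_pair hne1 hrp (htop _ _ (Or.inl rfl) (Or.inr rfl)),
    aux_pair hne2 hrp.symm (htop _ _ (Or.inr rfl) (Or.inl rfl))⟩
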